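/- The rational quaternion algebra (−6, 3 / ℚ), i.e. the quaternion algebra ℍ[ℚ, −6, 3] with i² = −6, j² = 3, ij = −ji, is a division ring. -/

import Mathlib

lemma L1 (b c : ℤ) (h : (3:ℤ) ∣ (c^2 - 2*b^2)) : (3:ℤ) ∣ b ∧ (3:ℤ) ∣ c := by
  have hb : ((b : ZMod 3) = 0 ∧ (c : ZMod 3) = 0) := by
    have : ((c^2 - 2*b^2 : ℤ) : ZMod 3) = 0 := by
      exact_mod_cast (ZMod.intCast_zmod_eq_zero_iff_dvd _ 3).2 h
    push_cast at this
    revert this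
    generalize (b : ZMod 3) = u
    generalize (c : ZMod 3) = v
    revert u v; decide
  exact ⟨(ZMod.intCast_zmod_eq_zero_iff_dvd _ 3).1 hb.1,
    (ZMod.intCast_zmod_eq_zero_iff_dvd _ 3).1 hb.2⟩

lemma descent : ∀ n : ℕ, ∀ a b c d : ℤ,
    a.natAbs + b.natAbs + c.natAbs + d.natAbs ≤ n →
    a^2 + 6*b^2 = 3*c^2 + 18*d^2 → a = 0 ∧ b = 0 ∧ c = 0 ∧ d = 0 := by
  intro n
  induction n with
  | zero => intro a b c d hm _; refine ⟨?_, ?_, ?_, ?_⟩ <;> omega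
  | succ n ih =>
    intro a b c d hm heq
    have h3a : (3:ℤ) ∣ a := by
      have : a^2 = 3 * (c^2 + 6*d^2 - 2*b^2) := by linarith
      exact Int.Prime.dvd_pow' (by norm_num) ⟨_, this⟩
    obtain ⟨a1, rfl⟩ := h3a
    have heq1 : 3*a1^2 + 2*b^2 = c^2 + 6*d^2 := by nlinarith [heq]
    obtain ⟨h3b, h3c⟩ := L1 b c ⟨a1^2 - 2*d^2, by linarith⟩
    obtain ⟨b1, rfl⟩ := h3b
    obtain ⟨c1, rfl⟩ := h3c
    have heq2 : a1^2 + 6*b1^2 = 3*c1^2 + 2*d^2 := by nlinarith [heq1]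
    obtain ⟨h3d, h3a1⟩ := L1 d a1 ⟨c1^2 - 2*b1^2, by linarith⟩
    obtain ⟨d1, rfl⟩ := h3d
    have heq3 : a1^2 + 6*b1^2 = 3*c1^2 + 18*d1^2 := by nlinarith [heq2]
    have hmeas : a1.natAbs + b1.natAbs + c1.natAbs + d1.natAbs ≤ n := by
      have ha' : (3*a1).natAbs = 3 * a1.natAbs := by simp [Int.natAbs_mul]
      have hb' : (3*b1).natAbs = 3 * b1.natAbs := by simp [Int.natAbs_mul]
      have hc' : (3*c1).natAbs = 3 * c1.natAbs := by simp [Int.natAbs_mul]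
      have hd' : (3*d1).natAbs = 3 * d1.natAbs := by simp [Int.natAbs_mul]
      omega
    obtain ⟨e1, e2, e3, e4⟩ := ih a1 b1 c1 d1 hmeas heq3
    subst e1 e2 e3 e4; norm_num

lemma rat_version (a b c d : ℚ) (h : a^2 + 6*b^2 = 3*c^2 + 18*d^2) :
    a = 0 ∧ b = 0 ∧ c = 0 ∧ d = 0 := by
  have key : ∀ q : ℚ, q * (q.den : ℚ) = (q.num : ℚ) := by
    intro q
    have h1 : (q.den : ℚ) ≠ 0 := by exact_mod_cast q.den_ne_zero
    exact ((div_eq_iff h1).1 (Rat.num_div_den q)).symm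
  set D : ℚ := (a.den : ℚ) * b.den * c.den * d.den with hD
  have hD0 : D ≠ 0 := by
    simp [hD]
  have hA : ((a.num * (b.den * c.den * d.den) : ℤ) : ℚ) = a * D := by
    push_cast; rw [hD, ← key a]; ring
  have hB : ((b.num * (a.den * c.den * d.den) : ℤ) : ℚ) = b * D := by
    push_cast; rw [hD, ← key b]; ring
  have hC : ((c.num * (a.den * b.den * d.den) : ℤ) : ℚ) = c * D := by
    push_cast; rw [hD, ← key c]; ring
  have hE : ((d.num * (a.den * b.den * c.den) : ℤ) : ℚ) = d * D := by
    push_cast; rw [hD, ← key d]; ring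
  set A := a.num * (b.den * c.den * d.den)
  set B := b.num * (a.den * c.den * d.den)
  set C := c.num * (a.den * b.den * d.den)
  set E := d.num * (a.den * b.den * c.den)
  have heqQ : (A:ℚ)^2 + 6*(B:ℚ)^2 = 3*(C:ℚ)^2 + 18*(E:ℚ)^2 := by
    rw [hA, hB, hC, hE]; linear_combination h * D^2
  have heqZ : A^2 + 6*B^2 = 3*C^2 + 18*E^2 := by exact_mod_cast heqQ
  obtain ⟨e1, e2, e3, e4⟩ := descent (A.natAbs + B.natAbs + C.natAbs + E.natAbs) A B C E le_rfl heqZ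
  rw [e1] at hA; rw [e2] at hB; rw [e3] at hC; rw [e4] at hE
  simp only [Int.cast_zero] at hA hB hC hE
  exact ⟨(mul_eq_zero.1 hA.symm).resolve_right hD0,
    (mul_eq_zero.1 hB.symm).resolve_right hD0,
    (mul_eq_zero.1 hC.symm).resolve_right hD0,
    (mul_eq_zero.1 hE.symm).resolve_right hD0⟩

open Quaternion

/-- The rational quaternion algebra `(−6, 3 / ℚ)` is a division ring:
every nonzero element is invertible. -/
theorem stmt_2 : ∀ x : ℍ[ℚ, -6, 3], x ≠ 0 → ∃ y : ℍ[ℚ, -6, 3], x * y = 1 ∧ y * x = 1 := by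
  intro x hx
  set n : ℚ := x.re^2 + 6*x.imI^2 - 3*x.imJ^2 - 18*x.imK^2 with hn
  have hn0 : n ≠ 0 := by
    intro h0
    have heq : x.re^2 + 6*x.imI^2 = 3*x.imJ^2 + 18*x.imK^2 := by
      rw [hn] at h0; linarith
    obtain ⟨e1, e2, e3, e4⟩ := rat_version _ _ _ _ heq
    exact hx (by ext <;> simp [e1, e2, e3, e4])
  refine ⟨⟨x.re/n, -x.imI/n, -x.imJ/n, -x.imK/n⟩, ?_, ?_⟩ <;>
  · ext <;>
      simp only [QuaternionAlgebra.re_mul, QuaternionAlgebra.imI_mul,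
        QuaternionAlgebra.imJ_mul, QuaternionAlgebra.imK_mul,
        QuaternionAlgebra.re_one, QuaternionAlgebra.imI_one,
        QuaternionAlgebra.imJ_one, QuaternionAlgebra.imK_one] <;>
      field_simp <;> ring_nf <;> rw [hn] <;> ring
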